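/- If p ⊗ c majorises q ⊗ c for probability vectors p, q of dimension d and a probability vector c (a catalyst), then the largest entry of q is at most the largest entry of p, and the smallest entry of q is at least the smallest entry of p. -/
import Mathlib


open Finset

/-- The sum of the `k` largest entries of `p` (as a supremum over subsets of size `k`). -/
noncomputable def sumLargest {ι : Type*} [Fintype ι] (p : ι → ℝ) (k : ℕ) : ℝ :=
  sSup {x : ℝ | ∃ s : Finset ι, s.card = k ∧ ∑ i ∈ s, p i = x}

/-- `p` majorises `q`: for every `k`, the sum of the `k` largest entries of `p`
is at least the sum of the `k` largest entries of `q`. -/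
def Majorizes {ι : Type*} [Fintype ι] (p q : ι → ℝ) : Prop :=
  ∀ k : ℕ, k ≤ Fintype.card ι → sumLargest q k ≤ sumLargest p k

/-- A probability vector: nonnegative entries summing to 1. -/
def IsProbVec {ι : Type*} [Fintype ι] (p : ι → ℝ) : Prop :=
  (∀ i, 0 ≤ p i) ∧ ∑ i, p i = 1

lemma sumLargest_set_finite {ι : Type*} [Fintype ι] (p : ι → ℝ) (k : ℕ) :
    {x : ℝ | ∃ s : Finset ι, s.card = k ∧ ∑ i ∈ s, p i = x}.Finite := by
  have : {x : ℝ | ∃ s : Finset ι, s.card = k ∧ ∑ i ∈ s, p i = x}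
      = (fun s : Finset ι => ∑ i ∈ s, p i) '' {s | s.card = k} := by
    ext x; simp [eq_comm]
  rw [this]
  exact (Set.toFinite _).image _

lemma le_sumLargest {ι : Type*} [Fintype ι] (p : ι → ℝ) (s : Finset ι) :
    ∑ i ∈ s, p i ≤ sumLargest p s.card :=
  le_csSup (sumLargest_set_finite p s.card).bddAbove ⟨s, rfl, rfl⟩

lemma sumLargest_le {ι : Type*} [Fintype ι] (p : ι → ℝ) {k : ℕ}
    (hk : k ≤ Fintype.card ι) {B : ℝ}
    (hB : ∀ s : Finset ι, s.card = k → ∑ i ∈ s, p i ≤ B) :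
    sumLargest p k ≤ B := by
  obtain ⟨s, -, hs⟩ := Finset.exists_subset_card_eq (s := (univ : Finset ι)) (by simpa using hk)
  refine csSup_le ⟨_, s, hs, rfl⟩ ?_
  rintro x ⟨t, ht, rfl⟩
  exact hB t ht

/-- If `p ⊗ c` majorises `q ⊗ c` for some catalyst `c`, then the largest entry of `q`
is at most the largest entry of `p`, and the smallest entry of `q` is at least the
smallest entry of `p`. -/
theorem catalytic_majorization_extreme_entries {d n : ℕ} (hd : 0 < d) (hn : 0 < n)
    (p q : Fin d → ℝ) (c : Fin n → ℝ)
    (hp : IsProbVec p) (hq : IsProbVec q) (hc : IsProbVec c)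
    (h : Majorizes (fun x : Fin d × Fin n => p x.1 * c x.2)
      (fun x : Fin d × Fin n => q x.1 * c x.2)) :
    sSup (Set.range q) ≤ sSup (Set.range p) ∧ sInf (Set.range p) ≤ sInf (Set.range q) := by
  have hdne : Nonempty (Fin d) := ⟨⟨0, hd⟩⟩
  have hnne : Nonempty (Fin n) := ⟨⟨0, hn⟩⟩
  have hcard : Fintype.card (Fin d × Fin n) = d * n := by simp
  -- argmax of c
  obtain ⟨j0, -, hj0⟩ := Finset.exists_max_image (univ : Finset (Fin n)) c ⟨⟨0, hn⟩, mem_univ _⟩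
  have hj0' : ∀ j, c j ≤ c j0 := fun j => hj0 j (mem_univ j)
  have hcj0 : 0 < c j0 := by
    by_contra hle
    push_neg at hle
    have : ∑ j, c j = 0 :=
      Finset.sum_eq_zero fun j _ => le_antisymm ((hj0' j).trans hle) (hc.1 j)
    rw [hc.2] at this; norm_num at this
  -- bounds on sSup/sInf of ranges
  have hbddP : BddAbove (Set.range p) := (Set.finite_range p).bddAbove
  have hbddP' : BddBelow (Set.range p) := (Set.finite_range p).bddBelow
  have hsupP_ge : ∀ i, p i ≤ sSup (Set.range p) := fun i => le_csSup hbddP ⟨i, rfl⟩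
  have hinfP_le : ∀ i, sInf (Set.range p) ≤ p i := fun i => csInf_le hbddP' ⟨i, rfl⟩
  have hsupP_nonneg : 0 ≤ sSup (Set.range p) := (hp.1 ⟨0, hd⟩).trans (hsupP_ge _)
  have hinfP_nonneg : 0 ≤ sInf (Set.range p) :=
    le_csInf (Set.range_nonempty p) (by rintro x ⟨i, rfl⟩; exact hp.1 i)
  -- total sums
  have htot : ∀ r : Fin d → ℝ, IsProbVec r →
      ∑ x : Fin d × Fin n, r x.1 * c x.2 = 1 := by
    intro r hr
    rw [Fintype.sum_prod_type]
    simp only [← Finset.mul_sum, hc.2, mul_one]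
    exact hr.2
  constructor
  · -- max part, via k = 1
    have key : ∀ i, q i ≤ sSup (Set.range p) := by
      intro i
      have h1 : q i * c j0 ≤ sumLargest (fun x : Fin d × Fin n => q x.1 * c x.2) 1 := by
        have := le_sumLargest (fun x : Fin d × Fin n => q x.1 * c x.2) {(i, j0)}
        simpa using this
      have h2 : sumLargest (fun x : Fin d × Fin n => p x.1 * c x.2) 1 ≤
          sSup (Set.range p) * c j0 := by
        refine sumLargest_le _ (by rw [hcard]; exact Nat.one_le_iff_ne_zero.2 (by positivity)) ?_
        intro s hs
        obtain ⟨a, rfl⟩ := Finset.card_eq_one.1 hs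
        simp only [Finset.sum_singleton]
        exact mul_le_mul (hsupP_ge a.1) (hj0' a.2) (hc.1 a.2) hsupP_nonneg
      have := h1.trans ((h 1 (by rw [hcard]; exact Nat.one_le_iff_ne_zero.2 (by positivity))).trans h2)
      exact le_of_mul_le_mul_right this hcj0
    exact csSup_le (Set.range_nonempty q) (by rintro x ⟨i, rfl⟩; exact key i)
  · -- min part
    set Zf : Finset (Fin n) := univ.filter (fun j => c j = 0) with hZf
    set z : ℕ := Zf.card with hz
    -- argmin of c over positive entries
    obtain ⟨j1, hj1mem, hj1⟩ := Finset.exists_min_image (univ.filter fun j => c j ≠ 0) c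
      ⟨j0, by simp [hcj0.ne']⟩
    have hj1pos : 0 < c j1 := by
      have := (Finset.mem_filter.1 hj1mem).2
      exact lt_of_le_of_ne (hc.1 j1) (Ne.symm this)
    have hzlt : z < n := by
      have : Zf ⊂ univ := by
        refine Finset.ssubset_univ_iff.2 ?_
        intro hZu
        have : j0 ∈ Zf := hZu ▸ mem_univ j0
        simp [hZf, hcj0.ne'] at this
      simpa using Finset.card_lt_card this
    have hk_le : d * z + 1 ≤ d * n := by
      calc d * z + 1 ≤ d * z + d := by omega
        _ = d * (z + 1) := by ring
        _ ≤ d * n := Nat.mul_le_mul_left d hzlt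
    set m : ℕ := d * n - (d * z + 1) with hm
    have hm_le : m ≤ Fintype.card (Fin d × Fin n) := by rw [hcard]; omega
    -- upper bound on sumLargest (p⊗c) m
    have hup : sumLargest (fun x : Fin d × Fin n => p x.1 * c x.2) m ≤
        1 - sInf (Set.range p) * c j1 := by
      refine sumLargest_le _ hm_le ?_
      intro s hs
      have hcompl : sᶜ.card = d * z + 1 := by
        rw [Finset.card_compl, hs, hcard, hm]; omega
      -- sᶜ contains a pair with c ≠ 0
      have hex : ∃ x ∈ sᶜ, c x.2 ≠ 0 := by
        by_contra hno
        push_neg at hno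
        have hsub : sᶜ ⊆ univ ×ˢ Zf := by
          intro x hx
          simp only [Finset.mem_product, Finset.mem_univ, true_and, hZf, Finset.mem_filter]
          exact hno x hx
        have h2 := Finset.card_le_card hsub
        rw [hcompl, Finset.card_product, Finset.card_univ, Fintype.card_fin, ← hz] at h2
        omega
      obtain ⟨x, hxmem, hxne⟩ := hex
      have hxc : c j1 ≤ c x.2 := hj1 x.2 (by simp [hxne])
      have hterm : sInf (Set.range p) * c j1 ≤ ∑ y ∈ sᶜ, p y.1 * c y.2 := by
        calc sInf (Set.range p) * c j1 ≤ p x.1 * c x.2 :=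
              mul_le_mul (hinfP_le x.1) hxc hj1pos.le (hp.1 x.1)
          _ ≤ ∑ y ∈ sᶜ, p y.1 * c y.2 :=
              Finset.single_le_sum (fun y _ => mul_nonneg (hp.1 y.1) (hc.1 y.2)) hxmem
      have hsplit : ∑ y ∈ s, p y.1 * c y.2 + ∑ y ∈ sᶜ, p y.1 * c y.2 = 1 := by
        rw [Finset.sum_add_sum_compl]; exact htot p hp
      linarith
    -- lower bound: for each i
    have key : ∀ i, sInf (Set.range p) ≤ q i := by
      intro i
      set t : Finset (Fin d × Fin n) := (univ ×ˢ Zf) ∪ {(i, j1)} with ht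
      have hdisj : Disjoint (univ ×ˢ Zf) ({(i, j1)} : Finset (Fin d × Fin n)) := by
        rw [Finset.disjoint_singleton_right]
        simp [hZf, hj1pos.ne']
      have htcard : t.card = d * z + 1 := by
        rw [ht, Finset.card_union_of_disjoint hdisj, Finset.card_product, Finset.card_univ,
          Fintype.card_fin, Finset.card_singleton]
      have htsum : ∑ y ∈ t, q y.1 * c y.2 = q i * c j1 := by
        rw [ht, Finset.sum_union hdisj, Finset.sum_singleton]
        have : ∑ y ∈ univ ×ˢ Zf, q y.1 * c y.2 = 0 := by
          refine Finset.sum_eq_zero fun y hy => ?_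
          have : c y.2 = 0 := by
            have := (Finset.mem_product.1 hy).2
            simpa [hZf] using this
          rw [this, mul_zero]
        rw [this, zero_add]
      have hcompl_card : tᶜ.card = m := by
        rw [Finset.card_compl, htcard, hcard, hm]
      have hsplit : ∑ y ∈ tᶜ, q y.1 * c y.2 = 1 - q i * c j1 := by
        have := Finset.sum_add_sum_compl t (fun y : Fin d × Fin n => q y.1 * c y.2)
        rw [htot q hq] at this
        rw [← htsum]; linarith
      have hlow : 1 - q i * c j1 ≤ sumLargest (fun x : Fin d × Fin n => q x.1 * c x.2) m := by
        have := le_sumLargest (fun x : Fin d × Fin n => q x.1 * c x.2) tᶜ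
        rw [hcompl_card, hsplit] at this
        exact this
      have hchain := hlow.trans ((h m hm_le).trans hup)
      have : sInf (Set.range p) * c j1 ≤ q i * c j1 := by linarith
      exact le_of_mul_le_mul_right this hj1pos
    exact le_csInf (Set.range_nonempty q) (by rintro x ⟨i, rfl⟩; exact key i)
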